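/- Let R be a Noetherian ring of prime characteristic p and I an ideal of positive height generated by n elements. Then for every w ∈ ℕ, the integral closure of I^(n+w) is contained in the tight closure (I^(w+1))*. In particular, closure(I^n) ⊆ I*. -/

import Mathlib

open Ideal Pointwise

section BSaux
variable {R : Type*} [CommRing R]

variable {R : Type*} [CommRing R]

/-- From an equation of integral dependence of degree `k` over `J`,
`x ^ (k - 1 + m) ∈ J ^ m` for all `m`. -/
lemma bs_pow_mem {J : Ideal R} {x : R} {k : ℕ} (hk : 0 < k) {a : ℕ → R}
    (ha : ∀ i ∈ Finset.Icc 1 k, a i ∈ J ^ i)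
    (heq : x ^ k + ∑ i ∈ Finset.Icc 1 k, a i * x ^ (k - i) = 0) :
    ∀ m : ℕ, x ^ (k - 1 + m) ∈ J ^ m := by
  intro m
  induction m using Nat.strong_induction_on with
  | _ m ih =>
    rcases Nat.eq_zero_or_pos m with rfl | hm
    · simp
    · have hxk : x ^ k = -∑ i ∈ Finset.Icc 1 k, a i * x ^ (k - i) :=
        eq_neg_of_add_eq_zero_left heq
      have e1 : k - 1 + m = k + (m - 1) := by omega
      have e2 : x ^ (k - 1 + m) = -∑ i ∈ Finset.Icc 1 k, a i * (x ^ (k - i) * x ^ (m - 1)) := by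
        rw [e1, pow_add, hxk, neg_mul, Finset.sum_mul, neg_inj]
        exact Finset.sum_congr rfl fun i _ => by ring
      rw [e2]
      refine neg_mem (Ideal.sum_mem _ fun i hi => ?_)
      simp only [Finset.mem_Icc] at hi
      rcases le_or_gt i m with him | him
      · have e3 : k - i + (m - 1) = k - 1 + (m - i) := by omega
        have h1 : x ^ (k - i) * x ^ (m - 1) = x ^ (k - 1 + (m - i)) := by
          rw [← pow_add, e3]
        rw [h1]
        have h2 : x ^ (k - 1 + (m - i)) ∈ J ^ (m - i) := ih _ (by omega)
        have h3 : a i * x ^ (k - 1 + (m - i)) ∈ J ^ i * J ^ (m - i) :=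
          Ideal.mul_mem_mul (ha i (by simp [Finset.mem_Icc]; omega)) h2
        rwa [← pow_add, Nat.add_sub_cancel' him] at h3
      · exact Ideal.mul_mem_right _ _
          (Ideal.pow_le_pow_right him.le (ha i (by simp [Finset.mem_Icc]; omega)))

lemma bs_span_pow (s : Set R) : ∀ D : ℕ, (Ideal.span s) ^ D = Ideal.span (s ^ D)
  | 0 => by rw [pow_zero, pow_zero, Ideal.span_one, Ideal.one_eq_top]
  | D + 1 => by
      rw [pow_succ, bs_span_pow s D, Ideal.span_mul_span', ← pow_succ]

lemma bs_mem_set_pow {s : Set R} :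
    ∀ {D : ℕ} {y : R}, y ∈ s ^ D →
      ∃ m : Multiset R, Multiset.card m = D ∧ (∀ z ∈ m, z ∈ s) ∧ m.prod = y
  | 0, y, hy => by
      rw [pow_zero, Set.mem_one] at hy
      exact ⟨0, by simp, by simp, by simp [hy.symm]⟩
  | D + 1, y, hy => by
      rw [pow_succ] at hy
      obtain ⟨u, hu, v, hv, rfl⟩ := Set.mem_mul.1 hy
      obtain ⟨m, hm1, hm2, hm3⟩ := bs_mem_set_pow hu
      refine ⟨v ::ₘ m, by simp [hm1], ?_, by simp [hm3, mul_comm]⟩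
      intro z hz
      rcases Multiset.mem_cons.1 hz with rfl | hz
      · exact hv
      · exact hm2 z hz

lemma bs_prod_pow_mem {I : Ideal R} (s : Finset R) (h : ∀ y ∈ s, y ∈ I) (b : R → ℕ) :
    (∏ y ∈ s, y ^ b y) ∈ I ^ (∑ y ∈ s, b y) := by
  classical
  induction s using Finset.induction with
  | empty => simp
  | insert _ _ hx ih =>
    rename_i y t
    rw [Finset.prod_insert hx, Finset.sum_insert hx, pow_add]
    exact Ideal.mul_mem_mul (Ideal.pow_mem_pow (h y (Finset.mem_insert_self y t)) _)
      (ih fun z hz => h z (Finset.mem_insert_of_mem hz))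

lemma bs_sum_div (s : Finset R) (a : R → ℕ) {n w q : ℕ} (hn : 0 < n) (hq : 0 < q)
    (hcard : s.card = n) (hsum : ∑ y ∈ s, a y = (n + w) * q) :
    w + 1 ≤ ∑ y ∈ s, a y / q := by
  have key : ∀ y ∈ s, a y + 1 ≤ q * (a y / q) + q := by
    intro y _
    have h1 : q * (a y / q) + a y % q = a y := Nat.div_add_mod (a y) q
    have h2 : a y % q < q := Nat.mod_lt _ hq
    have : a y + 1 = q * (a y / q) + (a y % q + 1) := by
      conv_lhs => rw [← h1]
      ring
    rw [this]
    exact Nat.add_le_add_left h2 _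
  have h3 : (∑ y ∈ s, (a y + 1)) ≤ ∑ y ∈ s, (q * (a y / q) + q) := Finset.sum_le_sum key
  rw [Finset.sum_add_distrib, Finset.sum_add_distrib, ← Finset.mul_sum,
    Finset.sum_const, Finset.sum_const, hcard, hsum, smul_eq_mul, smul_eq_mul] at h3
  -- h3 : (n + w) * q + n * 1 ≤ q * T + n * q
  set T := ∑ y ∈ s, a y / q with hT
  have h4 : w * q + n ≤ q * T := by
    have : n * q + (w * q + n) ≤ n * q + q * T := by
      calc n * q + (w * q + n) = (n + w) * q + n * 1 := by ring
        _ ≤ q * T + n * q := h3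
        _ = n * q + q * T := by ring
    exact le_of_add_le_add_left this
  have h5 : q * w < q * T := by
    calc q * w = w * q := mul_comm _ _
      _ < w * q + n := Nat.lt_add_of_pos_right hn
      _ ≤ q * T := h4
  exact Nat.lt_of_mul_lt_mul_left h5

lemma bs_prod_mem_frob {s : Finset R} {w q : ℕ} (hn : 0 < s.card) (hq : 0 < q)
    (m : Multiset R) (hm : ∀ z ∈ m, z ∈ (s : Set R))
    (hD : Multiset.card m = (s.card + w) * q) :
    m.prod ∈ Ideal.span ((fun y => y ^ q) '' ((Ideal.span (s : Set R)) ^ (w + 1) : Ideal R)) := by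
  classical
  have hsub : m.toFinset ⊆ s := fun z hz => hm z (Multiset.mem_toFinset.1 hz)
  set a : R → ℕ := fun y => m.count y with haa
  have hprod : m.prod = ∏ y ∈ s, y ^ a y := Finset.prod_multiset_count_of_subset m s hsub
  have hsum : ∑ y ∈ s, a y = (s.card + w) * q := by
    rw [← hD, ← Multiset.toFinset_sum_count_eq m]
    exact (Finset.sum_subset hsub fun z _ hz =>
      Multiset.count_eq_zero.2 (fun h => hz (Multiset.mem_toFinset.2 h))).symm
  have hT : w + 1 ≤ ∑ y ∈ s, a y / q := bs_sum_div s a hn hq rfl hsum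
  set g : R := ∏ y ∈ s, y ^ (a y / q) with hg
  have hgmem : g ∈ (Ideal.span (s : Set R)) ^ (w + 1) := by
    refine Ideal.pow_le_pow_right hT ?_
    exact bs_prod_pow_mem s (fun y hy => Ideal.subset_span hy) _
  have hdecomp : m.prod = g ^ q * ∏ y ∈ s, y ^ (a y % q) := by
    rw [hprod, hg, ← Finset.prod_pow, ← Finset.prod_mul_distrib]
    refine Finset.prod_congr rfl fun y _ => ?_
    rw [← pow_mul, ← pow_add]
    congr 1
    rw [mul_comm (a y / q) q, Nat.div_add_mod]
  rw [hdecomp]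
  exact Ideal.mul_mem_right _ _ (Ideal.subset_span ⟨g, hgmem, rfl⟩)

lemma bs_pow_le_frob {s : Finset R} {q : ℕ} (hn : 0 < s.card) (hq : 0 < q) (w : ℕ) :
    (Ideal.span (s : Set R)) ^ ((s.card + w) * q) ≤
      Ideal.span ((fun y => y ^ q) '' ((Ideal.span (s : Set R)) ^ (w + 1) : Ideal R)) := by
  rw [bs_span_pow]
  refine Ideal.span_le.2 fun y hy => ?_
  obtain ⟨m, hm1, hm2, hm3⟩ := bs_mem_set_pow hy
  rw [← hm3]
  exact bs_prod_mem_frob hn hq m hm2 hm1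

lemma bs_avoid {A B : Finset (Ideal R)} (hA : ∀ P ∈ A, P ∈ minimalPrimes R)
    (hB : ∀ P ∈ B, P ∈ minimalPrimes R) (hAB : ∀ P ∈ B, P ∉ A) :
    ∃ z : R, (∀ P ∈ A, z ∈ P) ∧ ∀ P ∈ B, z ∉ P := by
  classical
  have hnot : ¬ ((A.inf id : Ideal R) : Set R) ⊆ ⋃ P ∈ (B : Set (Ideal R)), (P : Set R) := by
    intro hsubs
    obtain ⟨j, hjB, hle⟩ :=
      (Ideal.subset_union_prime ⊥ ⊥ (fun P hP _ _ => (hB P hP).1.1)).1 hsubs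
    obtain ⟨i, hiA, hile⟩ := ((hB j hjB).1.1.inf_le').1 hle
    have hji : j ≤ i := (hB j hjB).2 ⟨(hA i hiA).1.1, bot_le⟩ hile
    have hij : i = j := le_antisymm hile hji
    exact hAB j hjB (hij ▸ hiA)
  obtain ⟨z, hz1, hz2⟩ := Set.not_subset.1 hnot
  refine ⟨z, fun P hP => (Submodule.mem_finsetInf.1 hz1) P hP, fun P hP hzP => hz2 ?_⟩
  exact Set.mem_biUnion hP hzP


end BSaux



/-- Integral closure of an ideal: elements satisfying an equation of integral dependence. -/
def intCl {R : Type*} [CommRing R] (I : Ideal R) : Set R :=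
  {x | ∃ k : ℕ, 0 < k ∧ ∃ a : ℕ → R, (∀ i ∈ Finset.Icc 1 k, a i ∈ I ^ i) ∧
      x ^ k + ∑ i ∈ Finset.Icc 1 k, a i * x ^ (k - i) = 0}

/-- Tight closure of an ideal in characteristic `p`. -/
def tightCl {R : Type*} [CommRing R] (p : ℕ) (I : Ideal R) : Set R :=
  {x | ∃ c : R, (∀ P ∈ minimalPrimes R, c ∉ P) ∧
      ∃ N : ℕ, ∀ e : ℕ, N ≤ e →
        c * x ^ p ^ e ∈ Ideal.span ((fun y => y ^ p ^ e) '' (I : Set R))}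

/-- Hochster–Huneke Briançon–Skoda: if `I` has positive height and is generated by `n`
elements in a Noetherian ring of characteristic `p`, then `closure(I^(n+w)) ⊆ (I^(w+1))*`
for all `w`; in particular `closure(I^n) ⊆ I*`. -/
theorem brianconSkoda_tight {R : Type*} [CommRing R] [IsNoetherianRing R]
    (p : ℕ) [Fact p.Prime] [CharP R p] (I : Ideal R) (n : ℕ)
    (hgen : ∃ s : Finset R, s.card = n ∧ Ideal.span (s : Set R) = I)
    (hht : ∀ P ∈ minimalPrimes R, ¬ I ≤ P) :
    (∀ w : ℕ, intCl (I ^ (n + w)) ⊆ tightCl p (I ^ (w + 1))) ∧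
      intCl (I ^ n) ⊆ tightCl p I := by
  classical
  obtain ⟨s, hcard, hspan⟩ := hgen
  subst hspan; subst hcard
  have hp : p.Prime := Fact.out
  have main : ∀ w : ℕ,
      intCl ((Ideal.span (s : Set R)) ^ (s.card + w)) ⊆
        tightCl p ((Ideal.span (s : Set R)) ^ (w + 1)) := by
    intro w x hx
    obtain ⟨k, hk, a, ha, heq⟩ := hx
    have hpow := bs_pow_mem hk ha heq
    rcases subsingleton_or_nontrivial R with hsub | hnt
    · exact ⟨0, fun P hP h0 => hP.1.1.ne_top (Subsingleton.elim P ⊤),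
        0, fun e _ => by rw [zero_mul]; exact Ideal.zero_mem _⟩
    -- a minimal prime exists, so `s.card > 0`
    obtain ⟨M, hM⟩ := Ideal.exists_maximal R
    haveI := hM.isPrime
    obtain ⟨P0, hP0, _⟩ := Ideal.exists_minimalPrimes_le (bot_le : (⊥ : Ideal R) ≤ M)
    have hn : 0 < s.card := by
      rcases Nat.eq_zero_or_pos s.card with h0 | h; swap
      · exact h
      exfalso
      rw [Finset.card_eq_zero] at h0
      subst h0
      exact hht P0 hP0 (by simp [Ideal.span_empty])
    -- the finite set of minimal primes, split by membership of `x`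
    have hfin : (minimalPrimes R).Finite := minimalPrimes.finite_of_isNoetherianRing R
    set F : Finset (Ideal R) := hfin.toFinset with hF
    set S : Finset (Ideal R) := F.filter (fun P => x ∈ P) with hSdef
    have hSmem : ∀ P ∈ S, P ∈ minimalPrimes R := fun P hP =>
      hfin.mem_toFinset.1 (Finset.mem_filter.1 hP).1
    have hCmem : ∀ P ∈ F \ S, P ∈ minimalPrimes R := fun P hP =>
      hfin.mem_toFinset.1 (Finset.mem_sdiff.1 hP).1
    obtain ⟨ze, he1, he2⟩ := bs_avoid hSmem hCmem (fun P hP => (Finset.mem_sdiff.1 hP).2)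
    obtain ⟨zf, hf1, hf2⟩ := bs_avoid hCmem hSmem
      (fun P hP hP' => (Finset.mem_sdiff.1 hP').2 hP)
    set c0 : R := ze * x ^ (k - 1) + zf with hc0def
    have hc0 : ∀ P ∈ minimalPrimes R, c0 ∉ P := by
      intro P hP hc0P
      have hPF : P ∈ F := hfin.mem_toFinset.2 hP
      by_cases hxP : x ∈ P
      · have hPS : P ∈ S := Finset.mem_filter.2 ⟨hPF, hxP⟩
        have h1 : ze * x ^ (k - 1) ∈ P := Ideal.mul_mem_right _ _ (he1 P hPS)
        have h2 : zf ∈ P := by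
          have h3 := P.sub_mem hc0P h1
          simpa [hc0def] using h3
        exact hf2 P hPS h2
      · have hPB : P ∈ F \ S :=
          Finset.mem_sdiff.2 ⟨hPF, fun h => hxP (Finset.mem_filter.1 h).2⟩
        have h2 : zf ∈ P := hf1 P hPB
        have h1 : ze * x ^ (k - 1) ∈ P := by
          have h3 := P.sub_mem hc0P h2
          simpa [hc0def] using h3
        rcases hP.1.1.mem_or_mem h1 with h | h
        · exact he2 P hPB h
        · exact hxP (hP.1.1.mem_of_pow_mem _ h)
    have hnil : ∀ m : ℕ, 0 < m →
        ∃ j ∈ ((Ideal.span (s : Set R)) ^ (s.card + w)) ^ m,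
          ∃ ν ∈ nilradical R, c0 * x ^ m = j + ν := by
      intro m hm
      refine ⟨ze * x ^ (k - 1 + m), Ideal.mul_mem_left _ _ (hpow m), zf * x ^ m, ?_,
        by rw [hc0def, add_mul, mul_assoc, ← pow_add]⟩
      rw [nilradical_eq_sInf, Ideal.mem_sInf]
      intro Q hQ
      haveI : Q.IsPrime := hQ
      obtain ⟨P, hPmin, hPQ⟩ := Ideal.exists_minimalPrimes_le (bot_le : (⊥ : Ideal R) ≤ Q)
      apply hPQ
      have hPF : P ∈ F := hfin.mem_toFinset.2 hPmin
      by_cases hxP : x ∈ P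
      · have hxm : x ^ m ∈ P := by
          have hme : x ^ m = x ^ (m - 1) * x := by rw [← pow_succ]; congr 1; omega
          rw [hme]; exact Ideal.mul_mem_left _ _ hxP
        exact Ideal.mul_mem_left _ _ hxm
      · have hPB : P ∈ F \ S :=
          Finset.mem_sdiff.2 ⟨hPF, fun h => hxP (Finset.mem_filter.1 h).2⟩
        exact Ideal.mul_mem_right _ _ (hf1 P hPB)
    obtain ⟨t, ht⟩ := IsNoetherianRing.isNilpotent_nilradical R
    have htq : t ≤ p ^ t :=
      le_trans (Nat.lt_two_pow_self (n := t)).le (Nat.pow_le_pow_left hp.two_le t)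
    refine ⟨c0 ^ p ^ t, fun P hP hcP => hc0 P hP (hP.1.1.mem_of_pow_mem _ hcP), t,
      fun e hte => ?_⟩
    have hq : 0 < p ^ (e - t) := pow_pos hp.pos _
    have hqe : p ^ e = p ^ (e - t) * p ^ t := by rw [← pow_add]; congr 1; omega
    obtain ⟨j, hj, ν, hν, hsumeq⟩ := hnil (p ^ (e - t)) hq
    have hν0 : ν ^ p ^ t = 0 := by
      have h1 : ν ^ p ^ t ∈ (nilradical R) ^ p ^ t := Ideal.pow_mem_pow hν _
      have h2 : (nilradical R) ^ p ^ t ≤ (nilradical R) ^ t := Ideal.pow_le_pow_right htq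
      rw [ht] at h2
      simpa using h2 h1
    have key : c0 ^ p ^ t * x ^ p ^ e = j ^ p ^ t := by
      calc c0 ^ p ^ t * x ^ p ^ e = (c0 * x ^ p ^ (e - t)) ^ p ^ t := by
            rw [hqe, pow_mul, mul_pow]
        _ = (j + ν) ^ p ^ t := by rw [hsumeq]
        _ = j ^ p ^ t + ν ^ p ^ t := add_pow_char_pow j ν p t
        _ = j ^ p ^ t := by rw [hν0, add_zero]
    rw [key]
    refine bs_pow_le_frob hn (pow_pos hp.pos e) w ?_
    have h1 : j ^ p ^ t ∈ (((Ideal.span (s : Set R)) ^ (s.card + w)) ^ p ^ (e - t)) ^ p ^ t :=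
      Ideal.pow_mem_pow hj _
    rwa [← pow_mul, ← pow_mul, ← hqe] at h1
  exact ⟨main, by simpa using main 0⟩
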